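/- For every X : ZMod n → ZMod 2, the sequence i ↦ rank C(𝔟^i X) of ranks over ZMod 2 is non-increasing in i, and for every i one has rank C(𝔟^i X) ≥ rank C(𝔟^{ι(2,n)} X); i.e. the minimum of the sequence is attained at i = ι(2,n). -/

import Mathlib

/-- The discrete Baker transformation: `(𝔟 X) i = ∑_{j : 2*j = i} X j`. -/
def baker {n : ℕ} [NeZero n] (X : ZMod n → ZMod 2) : ZMod n → ZMod 2 :=
  fun i => ∑ j ∈ Finset.univ.filter (fun j : ZMod n => (2 : ZMod n) * j = i), X j


/-- The circulant matrix of a vector `X : ZMod n → ZMod 2`, with entries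
`C(X) i j = X (j - i)`. -/
def circulantVec {n : ℕ} (X : ZMod n → ZMod 2) : Matrix (ZMod n) (ZMod n) (ZMod 2) :=
  Matrix.of fun i j => X (j - i)

open Polynomial Matrix

section Aux

variable {n : ℕ} [NeZero n]

private lemma circulant_baker (v : ZMod n → ZMod 2) :
    Matrix.circulant (baker v) = Matrix.circulant v * Matrix.circulant v := by
  rw [Matrix.circulant_mul, Matrix.circulant_inj]
  funext i
  rw [Matrix.mulVec, dotProduct]
  simp only [Matrix.circulant_apply]
  rw [← Finset.sum_filter_add_sum_filter_not Finset.univ (fun j : ZMod n => (2 : ZMod n) * j = i)]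
  have h2 : ∑ j ∈ Finset.univ.filter (fun j : ZMod n => ¬ (2 : ZMod n) * j = i),
      v (i - j) * v j = 0 := by
    apply Finset.sum_involution (fun j _ => i - j)
    · intro a _
      rw [sub_sub_cancel, mul_comm]
      exact CharTwo.add_self_eq_zero _
    · intro a ha hfa
      simp only [Finset.mem_filter, Finset.mem_univ, true_and] at ha
      intro h
      exact ha (by linear_combination -h)
    · intro a ha
      simp only [Finset.mem_filter, Finset.mem_univ, true_and] at ha ⊢
      intro h
      exact ha (by linear_combination -h)
    · intro a _; exact sub_sub_cancel i a
  rw [h2, add_zero]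
  unfold baker
  apply Finset.sum_congr rfl
  intro j hj
  simp only [Finset.mem_filter, Finset.mem_univ, true_and] at hj
  have hij : i - j = j := by linear_combination -hj
  rw [hij]
  have hx : ∀ x : ZMod 2, x * x = x := by decide
  rw [hx]

private lemma circulant_baker_iter (v : ZMod n → ZMod 2) (i : ℕ) :
    Matrix.circulant (baker^[i] v) = (Matrix.circulant v) ^ (2 ^ i) := by
  induction i with
  | zero => simp
  | succ i ih =>
    rw [Function.iterate_succ_apply', circulant_baker, ih, ← pow_add, pow_succ]
    ring_nf

noncomputable def shiftM (n : ℕ) [NeZero n] : Matrix (ZMod n) (ZMod n) (ZMod 2) :=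
  Matrix.circulant (Pi.single (1 : ZMod n) 1)

private lemma shiftM_pow (k : ℕ) :
    (shiftM n) ^ k = Matrix.circulant (Pi.single ((k : ZMod n)) 1) := by
  induction k with
  | zero => simp [Matrix.circulant_single_one]
  | succ k ih =>
    rw [pow_succ, ih, shiftM, Matrix.circulant_mul, Matrix.circulant_inj,
      Matrix.mulVec_single]
    funext i
    simp only [Matrix.circulant_apply, mul_one, Pi.single_apply]
    have hiff : i - 1 = (k : ZMod n) ↔ i = ((k + 1 : ℕ) : ZMod n) := by
      push_cast
      rw [sub_eq_iff_eq_add, add_comm]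
    simp [Matrix.circulant_apply, Pi.single_apply, hiff]

private lemma shiftM_pow_n : (shiftM n) ^ n = 1 := by
  rw [shiftM_pow, ZMod.natCast_self, Matrix.circulant_single_one]

noncomputable def polyOf (v : ZMod n → ZMod 2) : (ZMod 2)[X] :=
  ∑ j : ZMod n, Polynomial.C (v j) * Polynomial.X ^ (j.val)

private lemma circulant_eq_aeval (v : ZMod n → ZMod 2) :
    Matrix.circulant v = Polynomial.aeval (shiftM n) (polyOf v) := by
  rw [polyOf, map_sum]
  have hv : v = ∑ j : ZMod n, Pi.single j (v j) := (Finset.univ_sum_single v).symm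
  conv_lhs => rw [hv]
  have hcirc : Matrix.circulant (∑ j : ZMod n, Pi.single j (v j))
      = ∑ j : ZMod n, Matrix.circulant (Pi.single j (v j)) := by
    ext i i'
    simp [Matrix.circulant_apply, Matrix.sum_apply, Finset.sum_apply]
  rw [hcirc]
  apply Finset.sum_congr rfl
  intro j _
  rw [_root_.map_mul, Polynomial.aeval_C, Polynomial.aeval_X_pow, shiftM_pow,
    ZMod.natCast_rightInverse j, ← Algebra.smul_def, ← Matrix.circulant_smul]
  rw [Matrix.circulant_inj]
  funext x
  by_cases h : x = j <;> simp [h, Pi.single_apply]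

private lemma poly_vn (m : ℕ) (hm2 : ¬ 2 ∣ m) (q : (ZMod 2)[X]) :
    ∃ s w, q = q ^ 2 * s + (X ^ m - 1) * w := by
  set Q : (ZMod 2)[X] := X ^ m - 1 with hQ
  have hmcast : ((m : ZMod 2)) ≠ 0 := by
    rw [Ne, ZMod.natCast_eq_zero_iff]
    exact hm2
  have hsep : Q.Separable := by
    have := Polynomial.separable_X_pow_sub_C (1 : ZMod 2) hmcast one_ne_zero
    simpa [hQ] using this
  have hsq : Squarefree Q := hsep.squarefree
  set D := EuclideanDomain.gcd q Q with hD
  have hDq : D ∣ q := EuclideanDomain.gcd_dvd_left _ _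
  have hDQ : D ∣ Q := EuclideanDomain.gcd_dvd_right _ _
  obtain ⟨R, hR⟩ := hDQ
  have hcop : IsCoprime q R := by
    rw [← EuclideanDomain.gcd_isUnit_iff]
    set g := EuclideanDomain.gcd q R with hg
    have hgq : g ∣ q := EuclideanDomain.gcd_dvd_left _ _
    have hgR : g ∣ R := EuclideanDomain.gcd_dvd_right _ _
    have hgQ : g ∣ Q := hgR.trans ⟨D, by rw [hR]; ring⟩
    have hgD : g ∣ D := EuclideanDomain.dvd_gcd hgq hgQ
    apply hsq g
    rw [hR]
    exact mul_dvd_mul hgD hgR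
  obtain ⟨a, b, hab⟩ := hcop
  obtain ⟨q', hq'⟩ := hDq
  refine ⟨a, b * q', ?_⟩
  have hqR : q * R = Q * q' := by rw [hq', hR]; ring
  calc q = (a * q + b * R) * q := by rw [hab, one_mul]
    _ = q ^ 2 * a + b * (q * R) := by ring
    _ = q ^ 2 * a + Q * (b * q') := by rw [hqR]; ring

private lemma poly_step (m k : ℕ) (hm2 : ¬ 2 ∣ m) (q : (ZMod 2)[X]) (j : ℕ) (hj : k ≤ j) :
    ∃ s w, q ^ (2 ^ j) = q ^ (2 ^ (j + 1)) * s + (X ^ (2 ^ k * m) - 1) * w := by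
  obtain ⟨s₀, w₀, h⟩ := poly_vn m hm2 q
  have h2 : q ^ (2 ^ j) = (q ^ 2 * s₀) ^ (2 ^ j) + ((X ^ m - 1) * w₀) ^ (2 ^ j) := by
    rw [← add_pow_char_pow, ← h]
  have h3 : ((X : (ZMod 2)[X]) ^ m - 1) ^ (2 ^ j)
      = (X ^ (2 ^ k * m) - 1) ^ (2 ^ (j - k)) := by
    rw [show (2 : ℕ) ^ j = 2 ^ k * 2 ^ (j - k) by rw [← pow_add]; congr 1; omega, pow_mul]
    congr 1
    rw [sub_pow_char_pow, one_pow, ← pow_mul, mul_comm m]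
  have hpos : 1 ≤ 2 ^ (j - k) := Nat.one_le_two_pow
  refine ⟨s₀ ^ (2 ^ j), (X ^ (2 ^ k * m) - 1) ^ (2 ^ (j - k) - 1) * w₀ ^ (2 ^ j), ?_⟩
  rw [h2, mul_pow, mul_pow, h3]
  have h4 : (q ^ 2) ^ (2 ^ j) = q ^ (2 ^ (j + 1)) := by
    rw [← pow_mul]
    congr 1
    rw [pow_succ]
    ring
  have h5 : ((X : (ZMod 2)[X]) ^ (2 ^ k * m) - 1) ^ (2 ^ (j - k))
      = (X ^ (2 ^ k * m) - 1) * (X ^ (2 ^ k * m) - 1) ^ (2 ^ (j - k) - 1) := by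
    rw [← pow_succ']
    congr 1
    omega
  rw [h4, h5]
  ring

private lemma rank_circulantVec (v : ZMod n → ZMod 2) :
    (circulantVec v).rank = (Matrix.circulant v).rank := by
  have : circulantVec v = (Matrix.circulant v)ᵀ := rfl
  rw [this, Matrix.rank_transpose]

end Aux

theorem rank_circulant_baker_antitone {n : ℕ} [NeZero n] (X : ZMod n → ZMod 2) :
    (∀ i j : ℕ, i ≤ j →
      (circulantVec (baker^[j] X)).rank ≤ (circulantVec (baker^[i] X)).rank) ∧
    (∀ i : ℕ,
      (circulantVec (baker^[padicValNat 2 n] X)).rank ≤ (circulantVec (baker^[i] X)).rank) := by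
  set A := Matrix.circulant X with hA
  have hrank : ∀ i : ℕ, (circulantVec (baker^[i] X)).rank = (A ^ (2 ^ i)).rank := by
    intro i
    rw [rank_circulantVec, circulant_baker_iter]
  -- antitone part
  have hstep : ∀ i : ℕ, (A ^ (2 ^ (i + 1))).rank ≤ (A ^ (2 ^ i)).rank := by
    intro i
    have : A ^ (2 ^ (i + 1)) = A ^ (2 ^ i) * A ^ (2 ^ i) := by
      rw [← pow_add, pow_succ]
      ring_nf
    rw [this]
    exact Matrix.rank_mul_le_left _ _
  have hanti : Antitone (fun i => (A ^ (2 ^ i)).rank) :=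
    antitone_nat_of_succ_le hstep
  constructor
  · intro i j hij
    rw [hrank, hrank]
    exact hanti hij
  · -- minimum at k = padicValNat 2 n
    intro i
    set k : ℕ := padicValNat 2 n with hk
    rcases le_total i k with hik | hki
    · rw [hrank, hrank]
      exact hanti hik
    · -- for j ≥ k, rank (A ^ 2^j) ≤ rank (A ^ 2^(j+1))
      set m : ℕ := n / 2 ^ k with hm
      have hfac : n.factorization 2 = k := Nat.factorization_def n Nat.prime_two
      have hnm : 2 ^ k * m = n := by
        rw [hm, ← hfac]
        exact Nat.ordProj_mul_ordCompl_eq_self n 2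
      have hm2 : ¬ 2 ∣ m := by
        rw [hm, ← hfac]
        exact Nat.not_dvd_ordCompl Nat.prime_two (NeZero.ne n)
      have hineq : ∀ j : ℕ, k ≤ j → (A ^ (2 ^ j)).rank ≤ (A ^ (2 ^ (j + 1))).rank := by
        intro j hj
        obtain ⟨s, w, hpoly⟩ := poly_step m k hm2 (polyOf X) j hj
        have hmat : A ^ (2 ^ j) = A ^ (2 ^ (j + 1)) * (Polynomial.aeval (shiftM n) s) := by
          have := congrArg (Polynomial.aeval (shiftM n)) hpoly
          rw [map_add, _root_.map_mul, _root_.map_mul, map_pow, map_pow, map_sub, map_pow, _root_.map_one,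
            Polynomial.aeval_X, hnm, shiftM_pow_n, sub_self, zero_mul, add_zero,
            ← circulant_eq_aeval, ← hA] at this
          exact this
        rw [hmat]
        exact Matrix.rank_mul_le_left _ _
      have : ∀ i : ℕ, k ≤ i → (A ^ (2 ^ k)).rank ≤ (A ^ (2 ^ i)).rank := by
        intro i hi
        induction i, hi using Nat.le_induction with
        | base => exact le_rfl
        | succ j hj ih => exact le_trans ih (hineq j hj)
      rw [hrank, hrank]
      exact this i hki
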